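/- Let (g,[.,.]) be a Leibniz algebra over a field K, T a Rota-Baxter operator on g, and (V, l, r, T_V) a representation of the Rota-Baxter Leibniz algebra (g,[.,.],T). Define C^n = Hom(g^{⊗n},V) ⊕ Hom(g^{⊗(n−1)},V) for n ≥ 1 and d^n : C^n → C^{n+1} by d^n(α,β) = (δ^n(α), −∂^{n−1}(β) − φ^n(α)), where δ^n is the Loday–Pirashvili coboundary of (g,[.,.]) with coefficients in (V,l,r), ∂^n is the Loday–Pirashvili coboundary of the induced Leibniz algebra (g,[.,.]_*) with coefficients in the induced representation (V,l',r'), and φ^n(f)(x_1,…,x_n) = f(Tx_1,…,Tx_n) − Σ_{i=1}^{n} T_V(f(Tx_1,…,Tx_{i−1}, x_i, Tx_{i+1},…,Tx_n)). Then d^{n+1} ∘ d^n = 0 for all n ≥ 1. -/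

import Mathlib

/-- A bilinear map between modules over a field `K`, expressed as a predicate
on a curried two-argument function. -/
def Bilin (K : Type*) [Field K] {A B C : Type*} [AddCommGroup A] [Module K A]
    [AddCommGroup B] [Module K B] [AddCommGroup C] [Module K C]
    (f : A → B → C) : Prop :=
  (∀ a a' b, f (a + a') b = f a b + f a' b) ∧
  (∀ (c : K) (a : A) (b : B), f (c • a) b = c • f a b) ∧
  (∀ a b b', f a (b + b') = f a b + f a b') ∧
  (∀ (c : K) (a : A) (b : B), f a (c • b) = c • f a b)

/-- The (left) Leibniz identity for a bracket. -/
def IsLeibnizBracket {g : Type*} [AddCommGroup g] (br : g → g → g) : Prop :=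
  ∀ x y z, br x (br y z) = br (br x y) z + br y (br x z)


/-- A representation of a Leibniz algebra `(g, br)` on `V`, given by left and
right actions `l : g → V → V` and `r : V → g → V`. -/
def IsLeibnizRep {g V : Type*} [AddCommGroup g] [AddCommGroup V]
    (br : g → g → g) (l : g → V → V) (r : V → g → V) : Prop :=
  (∀ x y u, l x (l y u) = l (br x y) u + l y (l x u)) ∧
  (∀ x y u, l x (r u y) = r (l x u) y + r u (br x y)) ∧
  (∀ x y u, r u (br x y) = r (r u x) y + l x (r u y))

/-- A representation of a Rota-Baxter Leibniz algebra `(g, br, T)` on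
`(V, l, r, TV)`. -/
def IsRBRep {g V : Type*} [AddCommGroup g] [AddCommGroup V]
    (br : g → g → g) (T : g → g) (l : g → V → V) (r : V → g → V)
    (TV : V → V) : Prop :=
  IsLeibnizRep br l r ∧
  (∀ x u, l (T x) (TV u) = TV (l (T x) u + l x (TV u))) ∧
  (∀ x u, r (TV u) (T x) = TV (r (TV u) x + r u (T x)))

/-- The Loday–Pirashvili coboundary of a Leibniz algebra `(g, br)` with
coefficients in a representation `(V, l, r)`, on `n`-cochains
`f : g^n → V` (indices are `0`-based, corresponding to `x_1, …, x_{n+1}` in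
the classical `1`-based notation). -/
def lpCoboundary {g V : Type*} [AddCommGroup g] [AddCommGroup V]
    (br : g → g → g) (l : g → V → V) (r : V → g → V) (n : ℕ)
    (f : (Fin n → g) → V) : (Fin (n + 1) → g) → V :=
  fun x =>
    (∑ i : Fin n, ((-1 : ℤ) ^ (i : ℕ)) •
        l (x i.castSucc) (f fun k => x (i.castSucc.succAbove k)))
      + ((-1 : ℤ) ^ (n + 1)) • r (f fun k => x k.castSucc) (x (Fin.last n))
      + ∑ i : Fin (n + 1), ∑ j : Fin n,
          if (i : ℕ) ≤ (j : ℕ) then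
            ((-1 : ℤ) ^ ((i : ℕ) + 1)) •
              f (Function.update (fun k => x (i.succAbove k)) j
                  (br (x i) (x j.succ)))
          else 0

/-- The map `φ^n : Hom(g^{⊗n}, V) → Hom(g^{⊗n}, V)` given by
`φ^n(f)(x_1,…,x_n) = f(Tx_1,…,Tx_n)
  - Σ_i T_V (f (Tx_1,…,Tx_{i-1}, x_i, Tx_{i+1},…,Tx_n))`. -/
def phiMap {g V : Type*} [AddCommGroup V] (T : g → g) (TV : V → V) (n : ℕ)
    (f : (Fin n → g) → V) : (Fin n → g) → V :=
  fun x =>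
    f (fun k => T (x k))
      - ∑ i : Fin n, TV (f (Function.update (fun k => T (x k)) i (x i)))

namespace RBLA
set_option linter.unusedSectionVars false
variable {g V : Type*} [AddCommGroup g] [AddCommGroup V]

/-- Lie-derivative-style operator. -/
def lieD (br : g → g → g) (l : g → V → V) (x : g) {n : ℕ}
    (f : (Fin n → g) → V) : (Fin n → g) → V :=
  fun y => l x (f y) - ∑ j, f (Function.update y j (br x (y j)))

lemma cons_comp_succ_succAbove (x : g) {n : ℕ} (y : Fin (n+1) → g) (p : Fin (n+1)) :
    (fun k : Fin (n+1) => (Fin.cons x y : Fin (n+2) → g) (p.succ.succAbove k))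
      = (Fin.cons x (fun k : Fin n => y (p.succAbove k)) : Fin (n+1) → g) := by
  funext k
  cases k using Fin.cases with
  | zero => simp [Fin.succ_succAbove_zero]
  | succ k => simp [Fin.succ_succAbove_succ]

lemma cons_comp_castSucc (x : g) {n : ℕ} (y : Fin (n+1) → g) :
    (fun k : Fin (n+1) => (Fin.cons x y : Fin (n+2) → g) k.castSucc)
      = (Fin.cons x (fun k : Fin n => y k.castSucc) : Fin (n+1) → g) := by
  funext k
  cases k using Fin.cases with
  | zero => simp
  | succ k => simp [← Fin.succ_castSucc]

theorem cartan (br : g → g → g) (l : g → V → V) (r : V → g → V) {n : ℕ}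
    (f : (Fin (n+1) → g) → V) (x : g) (y : Fin (n+1) → g) :
    lpCoboundary br l r (n+1) f (Fin.cons x y)
      = lieD br l x f y - lpCoboundary br l r n (fun z => f (Fin.cons x z)) y := by
  unfold lpCoboundary lieD
  have hS1 : (∑ i : Fin (n+1), ((-1 : ℤ) ^ (i : ℕ)) •
        l ((Fin.cons x y : Fin (n+2) → g) i.castSucc)
          (f fun k => (Fin.cons x y : Fin (n+2) → g) (i.castSucc.succAbove k)))
      = l x (f y) - ∑ i : Fin n, ((-1 : ℤ) ^ (i : ℕ)) •
          l (y i.castSucc) (f (Fin.cons x fun k => y (i.castSucc.succAbove k))) := by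
    rw [Fin.sum_univ_succ]
    have h0 : (fun k : Fin (n+1) => (Fin.cons x y : Fin (n+2) → g)
        ((0 : Fin (n+1)).castSucc.succAbove k)) = y := by
      funext k
      simp [Fin.succAbove_zero]
    rw [h0]
    simp only [Fin.castSucc_zero, Fin.cons_zero, Fin.val_zero, pow_zero, one_smul]
    rw [sub_eq_add_neg, ← Finset.sum_neg_distrib]
    congr 1
    refine Finset.sum_congr rfl fun i _ => ?_
    rw [← Fin.succ_castSucc, cons_comp_succ_succAbove]
    simp [pow_succ, Fin.cons_succ]
  have hS2 : ((-1 : ℤ) ^ (n + 1 + 1)) •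
        r (f fun k => (Fin.cons x y : Fin (n+2) → g) k.castSucc)
          ((Fin.cons x y : Fin (n+2) → g) (Fin.last (n+1)))
      = -(((-1 : ℤ) ^ (n + 1)) •
          r (f (Fin.cons x fun k => y k.castSucc)) (y (Fin.last n))) := by
    rw [cons_comp_castSucc]
    rw [show (Fin.last (n+1)) = (Fin.last n).succ from rfl, Fin.cons_succ]
    rw [pow_succ]
    simp
  have hS3 : (∑ i : Fin (n + 2), ∑ j : Fin (n + 1),
          if (i : ℕ) ≤ (j : ℕ) then
            ((-1 : ℤ) ^ ((i : ℕ) + 1)) •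
              f (Function.update (fun k => (Fin.cons x y : Fin (n+2) → g) (i.succAbove k)) j
                  (br ((Fin.cons x y : Fin (n+2) → g) i) ((Fin.cons x y : Fin (n+2) → g) j.succ)))
          else 0)
      = -(∑ j : Fin (n+1), f (Function.update y j (br x (y j))))
        - ∑ i : Fin (n + 1), ∑ j : Fin n,
          if (i : ℕ) ≤ (j : ℕ) then
            ((-1 : ℤ) ^ ((i : ℕ) + 1)) •
              f (Fin.cons x (Function.update (fun k => y (i.succAbove k)) j
                  (br (y i) (y j.succ))))
          else 0 := by
    rw [Fin.sum_univ_succ]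
    have hrow0 : (∑ j : Fin (n + 1),
          if ((0 : Fin (n+2)) : ℕ) ≤ (j : ℕ) then
            ((-1 : ℤ) ^ (((0 : Fin (n+2)) : ℕ) + 1)) •
              f (Function.update (fun k => (Fin.cons x y : Fin (n+2) → g) ((0 : Fin (n+2)).succAbove k)) j
                  (br ((Fin.cons x y : Fin (n+2) → g) (0 : Fin (n+2)))
                    ((Fin.cons x y : Fin (n+2) → g) j.succ)))
          else 0)
        = -(∑ j : Fin (n+1), f (Function.update y j (br x (y j)))) := by
      rw [← Finset.sum_neg_distrib]
      refine Finset.sum_congr rfl fun j _ => ?_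
      have h0 : (fun k : Fin (n+1) => (Fin.cons x y : Fin (n+2) → g)
          ((0 : Fin (n+2)).succAbove k)) = y := by
        funext k; simp [Fin.succAbove_zero]
      rw [h0]
      simp
    rw [hrow0]
    have hrows : (∑ i : Fin (n+1), ∑ j : Fin (n + 1),
          if ((i.succ : Fin (n+2)) : ℕ) ≤ (j : ℕ) then
            ((-1 : ℤ) ^ (((i.succ : Fin (n+2)) : ℕ) + 1)) •
              f (Function.update (fun k => (Fin.cons x y : Fin (n+2) → g) ((i.succ : Fin (n+2)).succAbove k)) j
                  (br ((Fin.cons x y : Fin (n+2) → g) i.succ)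
                    ((Fin.cons x y : Fin (n+2) → g) j.succ)))
          else 0)
        = -∑ i : Fin (n + 1), ∑ j : Fin n,
          if (i : ℕ) ≤ (j : ℕ) then
            ((-1 : ℤ) ^ ((i : ℕ) + 1)) •
              f (Fin.cons x (Function.update (fun k => y (i.succAbove k)) j
                  (br (y i) (y j.succ))))
          else 0 := by
      rw [← Finset.sum_neg_distrib]
      refine Finset.sum_congr rfl fun i _ => ?_
      rw [Fin.sum_univ_succ, ← Finset.sum_neg_distrib]
      have hj0 : (if ((i.succ : Fin (n+2)) : ℕ) ≤ ((0 : Fin (n+1)) : ℕ) then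
            ((-1 : ℤ) ^ (((i.succ : Fin (n+2)) : ℕ) + 1)) •
              f (Function.update (fun k => (Fin.cons x y : Fin (n+2) → g) ((i.succ : Fin (n+2)).succAbove k)) (0 : Fin (n+1))
                  (br ((Fin.cons x y : Fin (n+2) → g) i.succ)
                    ((Fin.cons x y : Fin (n+2) → g) (0 : Fin (n+1)).succ)))
          else 0) = 0 := by
        rw [if_neg]
        simp
      rw [hj0, zero_add]
      refine Finset.sum_congr rfl fun j _ => ?_
      rw [cons_comp_succ_succAbove, Fin.cons_update]
      simp only [Fin.val_succ, Fin.cons_succ]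
      simp only [Nat.add_le_add_iff_right]
      split
      · rw [pow_succ (-(1:ℤ)) ((i:ℕ)+1)]
        simp
      · simp
    rw [hrows]
    abel
  rw [hS1, hS2, hS3]
  abel

end RBLA

section addf
variable {A B : Type*} [AddCommGroup A] [AddCommGroup B] {k : A → B}

lemma addf_zero (h : ∀ u v, k (u + v) = k u + k v) : k 0 = 0 :=
  map_zero (AddMonoidHom.mk' k h)
lemma addf_neg (h : ∀ u v, k (u + v) = k u + k v) (u : A) : k (-u) = -k u :=
  map_neg (AddMonoidHom.mk' k h) u
lemma addf_sub (h : ∀ u v, k (u + v) = k u + k v) (u v : A) : k (u - v) = k u - k v :=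
  map_sub (AddMonoidHom.mk' k h) u v
lemma addf_sum (h : ∀ u v, k (u + v) = k u + k v) {ι : Type*} (s : Finset ι) (F : ι → A) :
    k (∑ i ∈ s, F i) = ∑ i ∈ s, k (F i) :=
  map_sum (AddMonoidHom.mk' k h) F s
lemma addf_zsmul (h : ∀ u v, k (u + v) = k u + k v) (c : ℤ) (u : A) : k (c • u) = c • k u :=
  map_zsmul (AddMonoidHom.mk' k h) c u
lemma addf_ite (h : ∀ u v, k (u + v) = k u + k v) (P : Prop) [Decidable P] (u : A) :
    k (if P then u else 0) = if P then k u else 0 := by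
  split
  · rfl
  · exact addf_zero h
end addf

namespace RBLA
variable {g V : Type*} [AddCommGroup g] [AddCommGroup V]

/-- slot additivity -/
def SlotAdd {n : ℕ} (f : (Fin n → g) → V) : Prop :=
  ∀ (y : Fin n → g) (i : Fin n) (a b : g),
    f (Function.update y i (a + b)) = f (Function.update y i a) + f (Function.update y i b)


lemma update_self_comp_succAbove {n : ℕ} (y : Fin (n+1) → g) (p : Fin (n+1)) (v : g) :
    (fun k : Fin n => Function.update y p v (p.succAbove k)) = fun k => y (p.succAbove k) :=
  funext fun k => Function.update_of_ne (Fin.succAbove_ne p k) v y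

lemma update_comp_succAbove {n : ℕ} (y : Fin (n+1) → g) (p : Fin (n+1)) (k : Fin n) (v : g) :
    (fun k' : Fin n => Function.update y (p.succAbove k) v (p.succAbove k'))
      = Function.update (fun k' => y (p.succAbove k')) k v := by
  funext k'
  exact congrFun (Function.update_comp_eq_of_injective y Fin.succAbove_right_injective k v) k'

lemma update_castSucc_comp_castSucc {n : ℕ} (y : Fin (n+1) → g) (k : Fin n) (v : g) :
    (fun k' : Fin n => Function.update y k.castSucc v k'.castSucc)
      = Function.update (fun k' => y k'.castSucc) k v := by
  funext k'
  exact congrFun (Function.update_comp_eq_of_injective y (Fin.castSucc_injective n) k v) k'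

lemma ite_sub_distrib (P : Prop) [Decidable P] (a b : V) :
    (if P then a - b else 0) = (if P then a else 0) - (if P then b else 0) := by
  split <;> simp

lemma ite_add_distrib (P : Prop) [Decidable P] (a b : V) :
    (if P then a + b else 0) = (if P then a else 0) + (if P then b else 0) := by
  split <;> simp

lemma sum_ite_const {ι : Type*} (P : Prop) [Decidable P] (s : Finset ι) (T : ι → V) :
    ∑ i ∈ s, (if P then T i else 0) = if P then ∑ i ∈ s, T i else 0 := by
  split <;> simp

lemma innerC (br : g → g → g)
    (hleib : ∀ x y z, br x (br y z) = br (br x y) z + br y (br x z))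
    {m : ℕ} (f : (Fin m → g) → V) (hf : SlotAdd f) (a : g) (y : Fin (m+1) → g)
    (i : Fin (m+1)) (j : Fin m) (h : (i : ℕ) ≤ (j : ℕ)) :
    (∑ p : Fin (m+1),
      f (Function.update (fun k => Function.update y p (br a (y p)) (i.succAbove k)) j
          (br (Function.update y p (br a (y p)) i) (Function.update y p (br a (y p)) j.succ))))
    = ∑ k : Fin m,
        f (Function.update
            (Function.update (fun k' => y (i.succAbove k')) j (br (y i) (y j.succ))) k
            (br a (Function.update (fun k' => y (i.succAbove k')) j (br (y i) (y j.succ)) k))) := by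
  have hsj : i.succAbove j = j.succ :=
    Fin.succAbove_of_le_castSucc i j (by rw [Fin.le_def]; simpa using h)
  have hji : (j.succ : Fin (m+1)) ≠ i := by
    refine Fin.ne_of_val_ne ?_
    simp only [Fin.val_succ]
    omega
  -- off-diagonal identification
  have key : ∀ k : Fin m, k ≠ j →
      f (Function.update (fun k'' => Function.update y (i.succAbove k) (br a (y (i.succAbove k))) (i.succAbove k'')) j
          (br (Function.update y (i.succAbove k) (br a (y (i.succAbove k))) i)
             (Function.update y (i.succAbove k) (br a (y (i.succAbove k))) j.succ)))
      = f (Function.update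
            (Function.update (fun k' => y (i.succAbove k')) j (br (y i) (y j.succ))) k
            (br a (Function.update (fun k' => y (i.succAbove k')) j (br (y i) (y j.succ)) k))) := by
    intro k hk
    rw [update_comp_succAbove y i k]
    rw [Function.update_of_ne (Fin.succAbove_ne i k).symm]
    rw [Function.update_of_ne (hsj ▸ (Fin.succAbove_right_injective.ne (hk.symm : j ≠ k)))]
    rw [Function.update_of_ne hk]
    rw [Function.update_comm (Ne.symm hk)]
  -- diagonal identity
  have keyj :
      f (Function.update
            (Function.update (fun k' => y (i.succAbove k')) j (br (y i) (y j.succ))) j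
            (br a (Function.update (fun k' => y (i.succAbove k')) j (br (y i) (y j.succ)) j)))
      = f (Function.update (fun k'' => Function.update y i (br a (y i)) (i.succAbove k'')) j
            (br (Function.update y i (br a (y i)) i) (Function.update y i (br a (y i)) j.succ)))
        + f (Function.update (fun k'' => Function.update y (i.succAbove j) (br a (y (i.succAbove j))) (i.succAbove k'')) j
            (br (Function.update y (i.succAbove j) (br a (y (i.succAbove j))) i)
               (Function.update y (i.succAbove j) (br a (y (i.succAbove j))) j.succ))) := by
    rw [Function.update_self, Function.update_idem]
    rw [update_self_comp_succAbove, Function.update_self, Function.update_of_ne hji]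
    rw [update_comp_succAbove y i j]
    rw [Function.update_of_ne (Fin.succAbove_ne i j).symm]
    rw [hsj, Function.update_self, Function.update_idem]
    rw [hleib]
    exact hf _ j _ _
  rw [Fin.sum_univ_succAbove (fun p =>
      f (Function.update (fun k => Function.update y p (br a (y p)) (i.succAbove k)) j
          (br (Function.update y p (br a (y p)) i) (Function.update y p (br a (y p)) j.succ)))) i]
  have hsum : (∑ k : Fin m,
      (f (Function.update
            (Function.update (fun k' => y (i.succAbove k')) j (br (y i) (y j.succ))) k
            (br a (Function.update (fun k' => y (i.succAbove k')) j (br (y i) (y j.succ)) k)))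
       - f (Function.update (fun k'' => Function.update y (i.succAbove k) (br a (y (i.succAbove k))) (i.succAbove k'')) j
          (br (Function.update y (i.succAbove k) (br a (y (i.succAbove k))) i)
             (Function.update y (i.succAbove k) (br a (y (i.succAbove k))) j.succ)))))
      = f (Function.update (fun k'' => Function.update y i (br a (y i)) (i.succAbove k'')) j
            (br (Function.update y i (br a (y i)) i) (Function.update y i (br a (y i)) j.succ))) := by
    rw [Finset.sum_eq_single_of_mem j (Finset.mem_univ j)
      (fun k _ hk => by rw [key k hk]; exact sub_self _)]
    rw [keyj]
    abel
  rw [Finset.sum_sub_distrib] at hsum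
  have h2 := sub_eq_iff_eq_add.mp hsum
  rw [h2]

theorem commute (br : g → g → g) (l : g → V → V) (r : V → g → V)
    (hleib : ∀ x y z, br x (br y z) = br (br x y) z + br y (br x z))
    (hrep1 : ∀ x y u, l x (l y u) = l (br x y) u + l y (l x u))
    (hrep2 : ∀ x y u, l x (r u y) = r (l x u) y + r u (br x y))
    (hladd : ∀ x u v, l x (u + v) = l x u + l x v)
    (hradd : ∀ u v b, r (u + v) b = r u b + r v b)
    {m : ℕ} (f : (Fin m → g) → V) (hf : SlotAdd f) (a : g) (y : Fin (m+1) → g) :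
    lpCoboundary br l r m (lieD br l a f) y = lieD br l a (lpCoboundary br l r m f) y := by
  have hlsub : ∀ x u v, l x (u - v) = l x u - l x v := fun x => addf_sub (hladd x)
  have hlsum : ∀ (x : g) {ι : Type} (s : Finset ι) (F : ι → V),
      l x (∑ i ∈ s, F i) = ∑ i ∈ s, l x (F i) := fun x _ s F => addf_sum (hladd x) s F
  have hlzsmul : ∀ (x : g) (c : ℤ) u, l x (c • u) = c • l x u := fun x => addf_zsmul (hladd x)
  have hlite : ∀ (x : g) (P : Prop) [Decidable P] (u : V),
      l x (if P then u else 0) = if P then l x u else 0 := fun x P _ u => addf_ite (hladd x) P u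
  have hrsub : ∀ u v b, r (u - v) b = r u b - r v b :=
    fun u v b => addf_sub (k := fun w => r w b) (fun u v => hradd u v b) u v
  have hrsum : ∀ {ι : Type} (s : Finset ι) (F : ι → V) (b : g),
      r (∑ i ∈ s, F i) b = ∑ i ∈ s, r (F i) b :=
    fun {_} s F b => addf_sum (k := fun w => r w b) (fun u v => hradd u v b) s F
  unfold lpCoboundary lieD
  simp only [hladd, hlsub, hlsum, hlzsmul, hlite, hrsub, hrsum, smul_sub, Finset.smul_sum]
  simp only [ite_sub_distrib, Finset.sum_sub_distrib, Finset.sum_add_distrib]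
  have eqR1 : (∑ i : Fin m, (-1:ℤ)^(i:ℕ) • l a (l (y i.castSucc) (f fun k => y (i.castSucc.succAbove k))))
      = (∑ i : Fin m, (-1:ℤ)^(i:ℕ) • l (br a (y i.castSucc)) (f fun k => y (i.castSucc.succAbove k)))
        + (∑ i : Fin m, (-1:ℤ)^(i:ℕ) • l (y i.castSucc) (l a (f fun k => y (i.castSucc.succAbove k)))) := by
    rw [← Finset.sum_add_distrib]
    refine Finset.sum_congr rfl fun i _ => ?_
    rw [hrep1, smul_add]
  have eqR2 : ((-1:ℤ)^(m+1)) • l a (r (f fun k => y k.castSucc) (y (Fin.last m)))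
      = ((-1:ℤ)^(m+1)) • r (l a (f fun k => y k.castSucc)) (y (Fin.last m))
        + ((-1:ℤ)^(m+1)) • r (f fun k => y k.castSucc) (br a (y (Fin.last m))) := by
    rw [hrep2, smul_add]
  have eqA : (∑ p : Fin (m+1), ∑ i : Fin m, (-1:ℤ)^(i:ℕ) •
        l (Function.update y p (br a (y p)) i.castSucc)
          (f fun k => Function.update y p (br a (y p)) (i.castSucc.succAbove k)))
      = (∑ i : Fin m, (-1:ℤ)^(i:ℕ) • l (br a (y i.castSucc)) (f fun k => y (i.castSucc.succAbove k)))
        + ∑ i : Fin m, ∑ k : Fin m, (-1:ℤ)^(i:ℕ) •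
            l (y i.castSucc) (f (Function.update (fun k' => y (i.castSucc.succAbove k')) k
              (br a (y (i.castSucc.succAbove k))))) := by
    rw [Finset.sum_comm, ← Finset.sum_add_distrib]
    refine Finset.sum_congr rfl fun i _ => ?_
    rw [Fin.sum_univ_succAbove (fun p => (-1:ℤ)^(i:ℕ) •
        l (Function.update y p (br a (y p)) i.castSucc)
          (f fun k => Function.update y p (br a (y p)) (i.castSucc.succAbove k))) i.castSucc]
    congr 1
    · rw [Function.update_self, update_self_comp_succAbove]
    · refine Finset.sum_congr rfl fun k _ => ?_
      rw [update_comp_succAbove y i.castSucc k]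
      rw [Function.update_of_ne (Fin.succAbove_ne i.castSucc k).symm]
  have eqB : (∑ p : Fin (m+1), ((-1:ℤ)^(m+1)) •
        r (f fun k => Function.update y p (br a (y p)) k.castSucc)
          (Function.update y p (br a (y p)) (Fin.last m)))
      = ((-1:ℤ)^(m+1)) • r (f fun k => y k.castSucc) (br a (y (Fin.last m)))
        + ∑ k : Fin m, ((-1:ℤ)^(m+1)) •
            r (f (Function.update (fun k' => y k'.castSucc) k (br a (y k.castSucc)))) (y (Fin.last m)) := by
    rw [Fin.sum_univ_succAbove (fun p => ((-1:ℤ)^(m+1)) •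
        r (f fun k => Function.update y p (br a (y p)) k.castSucc)
          (Function.update y p (br a (y p)) (Fin.last m))) (Fin.last m)]
    congr 1
    · have h1 : (fun k : Fin m => Function.update y (Fin.last m) (br a (y (Fin.last m))) k.castSucc)
          = fun k => y k.castSucc :=
        funext fun k => Function.update_of_ne (Fin.castSucc_lt_last k).ne _ y
      rw [h1, Function.update_self]
    · refine Finset.sum_congr rfl fun k _ => ?_
      rw [Fin.succAbove_last, update_castSucc_comp_castSucc]
      rw [Function.update_of_ne (Fin.castSucc_lt_last k).ne']
  have eqC : (∑ p : Fin (m+1), ∑ i : Fin (m+1), ∑ j : Fin m,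
        if (i:ℕ) ≤ (j:ℕ) then (-1:ℤ)^((i:ℕ)+1) •
          f (Function.update (fun k => Function.update y p (br a (y p)) (i.succAbove k)) j
              (br (Function.update y p (br a (y p)) i) (Function.update y p (br a (y p)) j.succ)))
        else 0)
      = ∑ i : Fin (m+1), ∑ j : Fin m,
          if (i:ℕ) ≤ (j:ℕ) then ∑ k : Fin m, (-1:ℤ)^((i:ℕ)+1) •
            f (Function.update
                (Function.update (fun k' => y (i.succAbove k')) j (br (y i) (y j.succ))) k
                (br a (Function.update (fun k' => y (i.succAbove k')) j (br (y i) (y j.succ)) k)))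
          else 0 := by
    rw [Finset.sum_comm]
    refine Finset.sum_congr rfl fun i _ => ?_
    rw [Finset.sum_comm]
    refine Finset.sum_congr rfl fun j _ => ?_
    rw [sum_ite_const]
    by_cases h : (i:ℕ) ≤ (j:ℕ)
    · rw [if_pos h, if_pos h, ← Finset.smul_sum, ← Finset.smul_sum]
      congr 1
      exact innerC br hleib f hf a y i j h
    · rw [if_neg h, if_neg h]
  rw [eqR1, eqR2, eqA, eqB, eqC]
  abel

lemma delta_add (br : g → g → g) (l : g → V → V) (r : V → g → V)
    (hladd : ∀ x u v, l x (u + v) = l x u + l x v)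
    (hradd : ∀ u v b, r (u + v) b = r u b + r v b)
    {n : ℕ} (f₁ f₂ : (Fin n → g) → V) (x : Fin (n+1) → g) :
    lpCoboundary br l r n (fun y => f₁ y + f₂ y) x
      = lpCoboundary br l r n f₁ x + lpCoboundary br l r n f₂ x := by
  unfold lpCoboundary
  simp only [hladd, hradd, smul_add, ite_add_distrib, Finset.sum_add_distrib]
  abel

lemma delta_sub (br : g → g → g) (l : g → V → V) (r : V → g → V)
    (hladd : ∀ x u v, l x (u + v) = l x u + l x v)
    (hradd : ∀ u v b, r (u + v) b = r u b + r v b)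
    {n : ℕ} (f₁ f₂ : (Fin n → g) → V) (x : Fin (n+1) → g) :
    lpCoboundary br l r n (fun y => f₁ y - f₂ y) x
      = lpCoboundary br l r n f₁ x - lpCoboundary br l r n f₂ x := by
  have hlsub : ∀ x u v, l x (u - v) = l x u - l x v := fun x => addf_sub (hladd x)
  have hrsub : ∀ u v b, r (u - v) b = r u b - r v b :=
    fun u v b => addf_sub (k := fun w => r w b) (fun u v => hradd u v b) u v
  unfold lpCoboundary
  simp only [hlsub, hrsub, smul_sub, ite_sub_distrib, Finset.sum_sub_distrib]
  abel

lemma delta_neg (br : g → g → g) (l : g → V → V) (r : V → g → V)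
    (hladd : ∀ x u v, l x (u + v) = l x u + l x v)
    (hradd : ∀ u v b, r (u + v) b = r u b + r v b)
    {n : ℕ} (f₁ : (Fin n → g) → V) (x : Fin (n+1) → g) :
    lpCoboundary br l r n (fun y => -f₁ y) x = -lpCoboundary br l r n f₁ x := by
  have hlneg : ∀ x u, l x (-u) = -l x u := fun x => addf_neg (hladd x)
  have hrneg : ∀ u b, r (-u) b = -r u b :=
    fun u b => addf_neg (k := fun w => r w b) (fun u v => hradd u v b) u
  have hite : ∀ (P : Prop) [Decidable P] (a : V),
      (if P then -a else 0) = -(if P then a else 0) := by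
    intro P _ a; split <;> simp
  unfold lpCoboundary
  simp only [hlneg, hrneg, smul_neg, hite, Finset.sum_neg_distrib]
  abel

lemma slotadd_cons {n : ℕ} {f : (Fin (n+1) → g) → V} (hf : SlotAdd f) (a : g) :
    SlotAdd (fun w : Fin n → g => f (Fin.cons a w)) := by
  intro y i b c
  simp only [Fin.cons_update]
  exact hf _ i.succ b c

theorem sq_zero (br : g → g → g) (l : g → V → V) (r : V → g → V)
    (hleib : ∀ x y z, br x (br y z) = br (br x y) z + br y (br x z))
    (hrep1 : ∀ x y u, l x (l y u) = l (br x y) u + l y (l x u))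
    (hrep2 : ∀ x y u, l x (r u y) = r (l x u) y + r u (br x y))
    (hrep3 : ∀ x y u, r u (br x y) = r (r u x) y + l x (r u y))
    (hladd : ∀ x u v, l x (u + v) = l x u + l x v)
    (hradd : ∀ u v b, r (u + v) b = r u b + r v b) :
    ∀ (n : ℕ) (f : (Fin n → g) → V), SlotAdd f → ∀ x : Fin (n+2) → g,
      lpCoboundary br l r (n+1) (lpCoboundary br l r n f) x = 0 := by
  intro n
  induction n with
  | zero =>
    intro f hf x
    unfold lpCoboundary
    simp [Fin.sum_univ_succ]
    have hf0 : ∀ z : Fin 0 → g, f z = f (fun k => k.elim0) :=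
      fun z => congrArg f (Subsingleton.elim _ _)
    rw [hf0 (fun k => x k.castSucc.succ), hf0 (fun k => x k.castSucc.castSucc)]
    have hlneg : ∀ a u, l a (-u) = -l a u := fun a =>
      map_neg (AddMonoidHom.mk' (l a) (hladd a))
    have hrneg : ∀ u b, r (-u) b = -r u b := fun u b =>
      map_neg (AddMonoidHom.mk' (fun w => r w b) (fun u v => hradd u v b)) u
    rw [hlneg, hrneg, hrep3]
    rw [hf0 (fun k => Function.update (fun k => x k.succ) 0 (br (x 0) (x 1)) k.castSucc)]
    abel
  | succ n ih =>
    intro f hf x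
    rw [← Fin.cons_self_tail x]
    rw [cartan br l r (lpCoboundary br l r (n+1) f) (x 0) (Fin.tail x)]
    have hcons : (fun z => lpCoboundary br l r (n+1) f (Fin.cons (x 0) z))
        = fun z => lieD br l (x 0) f z
            - lpCoboundary br l r n (fun w => f (Fin.cons (x 0) w)) z :=
      funext fun z => cartan br l r f (x 0) z
    rw [hcons]
    rw [delta_sub br l r hladd hradd _ _ (Fin.tail x)]
    rw [commute br l r hleib hrep1 hrep2 hladd hradd f hf (x 0) (Fin.tail x)]
    rw [ih (fun w => f (Fin.cons (x 0) w)) (slotadd_cons hf (x 0)) (Fin.tail x)]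
    abel

end RBLA

namespace RBLA
variable {g V : Type*} [AddCommGroup g] [AddCommGroup V]

lemma Tupd (T : g → g) {n : ℕ} (z : Fin n → g) (j : Fin n) (v : g) :
    (fun k => T (Function.update z j v k)) = Function.update (fun k => T (z k)) j (T v) := by
  funext k
  by_cases h : k = j
  · subst h; simp
  · simp [Function.update_of_ne h]

lemma phi_cons (T : g → g) (TV : V → V) {m : ℕ} (F : (Fin (m+1) → g) → V)
    (x : g) (y : Fin m → g) :
    phiMap T TV (m+1) F (Fin.cons x y)
      = phiMap T TV m (fun z => F (Fin.cons (T x) z)) y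
        - TV (F (Fin.cons x (fun k => T (y k)))) := by
  unfold phiMap
  have hc : (fun k : Fin (m+1) => T ((Fin.cons x y : Fin (m+1) → g) k))
      = (Fin.cons (T x) (fun k => T (y k)) : Fin (m+1) → g) := by
    funext k
    cases k using Fin.cases with
    | zero => simp
    | succ k => simp
  rw [hc, Fin.sum_univ_succ]
  rw [show Function.update (Fin.cons (T x) (fun k => T (y k)) : Fin (m+1) → g) 0
        ((Fin.cons x y : Fin (m+1) → g) 0) = Fin.cons x (fun k => T (y k)) from by
    simp [Fin.update_cons_zero]]
  have hs : ∀ i : Fin m,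
      Function.update (Fin.cons (T x) (fun k => T (y k)) : Fin (m+1) → g) i.succ
        ((Fin.cons x y : Fin (m+1) → g) i.succ)
      = Fin.cons (T x) (Function.update (fun k => T (y k)) i (y i)) := by
    intro i
    rw [← Fin.cons_update]
    simp
  rw [Finset.sum_congr rfl fun i _ => by rw [hs i]]
  abel

lemma phi_sub (T : g → g) (TV : V → V) (hTVadd : ∀ u v, TV (u + v) = TV u + TV v)
    {n : ℕ} (F G : (Fin n → g) → V) (w : Fin n → g) :
    phiMap T TV n (fun z => F z - G z) w = phiMap T TV n F w - phiMap T TV n G w := by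
  have hTVsub : ∀ u v, TV (u - v) = TV u - TV v := addf_sub hTVadd
  unfold phiMap
  simp only [hTVsub, Finset.sum_sub_distrib]
  abel

section star
variable (br : g → g → g) (T : g → g) (l : g → V → V) (r : V → g → V) (TV : V → V)

lemma hTB_lemma (hTadd : ∀ a b, T (a + b) = T a + T b)
    (hRB : ∀ a b, br (T a) (T b) = T (br (T a) b + br a (T b))) :
    ∀ a b, T (br a (T b) + br (T a) b) = br (T a) (T b) := by
  intro a b
  rw [hTadd, hRB a b, hTadd]
  exact add_comm _ _

lemma lstar_TV (hRB1 : ∀ a u, l (T a) (TV u) = TV (l (T a) u + l a (TV u)))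
    (hTVadd : ∀ u v, TV (u + v) = TV u + TV v) :
    ∀ a u, l (T a) (TV u) - TV (l a (TV u)) = TV (l (T a) u) := by
  intro a u
  rw [hRB1, hTVadd]
  abel

lemma rstar_TV (hRB2 : ∀ a u, r (TV u) (T a) = TV (r (TV u) a + r u (T a)))
    (hTVadd : ∀ u v, TV (u + v) = TV u + TV v) :
    ∀ u a, r (TV u) (T a) - TV (r (TV u) a) = TV (r u (T a)) := by
  intro u a
  rw [hRB2, hTVadd]
  abel

lemma starDelta_TV (hTadd : ∀ a b, T (a + b) = T a + T b)
    (hRB : ∀ a b, br (T a) (T b) = T (br (T a) b + br a (T b)))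
    (hRB1 : ∀ a u, l (T a) (TV u) = TV (l (T a) u + l a (TV u)))
    (hRB2 : ∀ a u, r (TV u) (T a) = TV (r (TV u) a + r u (T a)))
    (hTVadd : ∀ u v, TV (u + v) = TV u + TV v)
    {n : ℕ} (F : (Fin n → g) → V) (y : Fin (n+1) → g) :
    lpCoboundary (fun a b => br a (T b) + br (T a) b)
        (fun a u => l (T a) u - TV (l a u))
        (fun u a => r u (T a) - TV (r u a)) n
        (fun z => TV (F (fun k => T (z k)))) y
      = TV (lpCoboundary br l r n F (fun k => T (y k))) := by
  have hTB := hTB_lemma br T (hTadd) (hRB)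
  have hl := lstar_TV T l TV hRB1 hTVadd
  have hr := rstar_TV T r TV hRB2 hTVadd
  have hTVsum : ∀ {ι : Type} (s : Finset ι) (G : ι → V),
      TV (∑ i ∈ s, G i) = ∑ i ∈ s, TV (G i) := fun {_} s G => addf_sum hTVadd s G
  have hTVzsmul : ∀ (c : ℤ) u, TV (c • u) = c • TV u := addf_zsmul hTVadd
  have hTVite : ∀ (P : Prop) [Decidable P] (u : V),
      TV (if P then u else 0) = if P then TV u else 0 := fun P _ u => addf_ite hTVadd P u
  unfold lpCoboundary
  rw [hTVadd, hTVadd, hTVsum, hTVsum]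
  congr 1
  · congr 1
    · refine Finset.sum_congr rfl fun i _ => ?_
      beta_reduce
      rw [hl, hTVzsmul]
    · beta_reduce
      rw [hr, hTVzsmul]
  · refine Finset.sum_congr rfl fun i _ => ?_
    rw [hTVsum]
    refine Finset.sum_congr rfl fun j _ => ?_
    beta_reduce
    rw [hTVite, hTVzsmul]
    congr 2
    rw [Tupd T (fun k => y (i.succAbove k)) j]
    rw [hTB]
end star

lemma offdiag_eq {V : Type*} [AddCommGroup V] {n : ℕ} (F : Fin (n+1) → Fin (n+1) → V) :
    (∑ s : Fin (n+1), ∑ t : Fin n, F s (s.succAbove t))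
      = ∑ t : Fin (n+1), ∑ s : Fin n, F (t.succAbove s) t := by
  have h1 : ∀ s, (∑ t : Fin n, F s (s.succAbove t)) = (∑ t, F s t) - F s s := fun s => by
    rw [Fin.sum_univ_succAbove (F s) s]; abel
  have h2 : ∀ t, (∑ s : Fin n, F (t.succAbove s) t) = (∑ s, F s t) - F t t := fun t => by
    rw [Fin.sum_univ_succAbove (fun s => F s t) t]; abel
  rw [Finset.sum_congr rfl fun s _ => h1 s, Finset.sum_congr rfl fun t _ => h2 t,
    Finset.sum_sub_distrib, Finset.sum_sub_distrib, Finset.sum_comm]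

section starkey
variable {g V : Type*} [AddCommGroup g] [AddCommGroup V]
variable (br : g → g → g) (T : g → g) (l : g → V → V) (TV : V → V)

lemma starKey (hTadd : ∀ a b, T (a + b) = T a + T b)
    (hRB : ∀ a b, br (T a) (T b) = T (br (T a) b + br a (T b)))
    (hRB1 : ∀ a u, l (T a) (TV u) = TV (l (T a) u + l a (TV u)))
    (hladd : ∀ x u v, l x (u + v) = l x u + l x v)
    (hTVadd : ∀ u v, TV (u + v) = TV u + TV v)
    {n : ℕ} (f : (Fin (n+1) → g) → V) (hf : SlotAdd f) (x : g) (y : Fin (n+1) → g) :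
    lieD (fun a b => br a (T b) + br (T a) b) (fun a u => l (T a) u - TV (l a u)) x
        (phiMap T TV (n+1) f) y
      = phiMap T TV (n+1) (lieD br l (T x) f) y - TV (lieD br l x f (fun k => T (y k))) := by
  have hTB := hTB_lemma br T hTadd hRB
  have hlsub : ∀ (a : g) (u v : V), l a (u - v) = l a u - l a v := fun a => addf_sub (hladd a)
  have hlsum : ∀ (a : g) {ι : Type} (s : Finset ι) (G : ι → V),
      l a (∑ i ∈ s, G i) = ∑ i ∈ s, l a (G i) := fun a {_} s G => addf_sum (hladd a) s G
  have hTVsub : ∀ u v, TV (u - v) = TV u - TV v := addf_sub hTVadd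
  have hTVsum : ∀ {ι : Type} (s : Finset ι) (G : ι → V),
      TV (∑ i ∈ s, G i) = ∑ i ∈ s, TV (G i) := fun {_} s G => addf_sum hTVadd s G
  unfold lieD phiMap
  simp only [Tupd, hTB, hlsub, hlsum, hTVsub, hTVsum, Finset.sum_sub_distrib]
  have e1 : ∀ i : Fin (n+1),
      l (T x) (TV (f (Function.update (fun k => T (y k)) i (y i))))
        = TV (l (T x) (f (Function.update (fun k => T (y k)) i (y i))))
          + TV (l x (TV (f (Function.update (fun k => T (y k)) i (y i))))) := fun i => by
    rw [hRB1, hTVadd]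
  have e2 : (∑ j : Fin (n+1), ∑ i : Fin (n+1),
        TV (f (Function.update (Function.update (fun k => T (y k)) j (br (T x) (T (y j)))) i
          (Function.update y j (br x (T (y j)) + br (T x) (y j)) i))))
      = (∑ j : Fin (n+1), TV (f (Function.update (fun k => T (y k)) j (br x (T (y j))))))
        + ((∑ j : Fin (n+1), TV (f (Function.update (fun k => T (y k)) j (br (T x) (y j)))))
        + ∑ j : Fin (n+1), ∑ i : Fin n,
            TV (f (Function.update (Function.update (fun k => T (y k)) j (br (T x) (T (y j))))
              (j.succAbove i) (y (j.succAbove i))))) := by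
    rw [← Finset.sum_add_distrib, ← Finset.sum_add_distrib]
    refine Finset.sum_congr rfl fun j _ => ?_
    rw [Fin.sum_univ_succAbove (fun i =>
        TV (f (Function.update (Function.update (fun k => T (y k)) j (br (T x) (T (y j)))) i
          (Function.update y j (br x (T (y j)) + br (T x) (y j)) i)))) j]
    rw [Function.update_self, Function.update_idem, hf, hTVadd]
    have hoff : ∀ i : Fin n,
        TV (f (Function.update (Function.update (fun k => T (y k)) j (br (T x) (T (y j))))
          (j.succAbove i) (Function.update y j (br x (T (y j)) + br (T x) (y j)) (j.succAbove i))))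
        = TV (f (Function.update (Function.update (fun k => T (y k)) j (br (T x) (T (y j))))
          (j.succAbove i) (y (j.succAbove i)))) := fun i => by
      rw [Function.update_of_ne (Fin.succAbove_ne j i)]
    rw [Finset.sum_congr rfl fun i _ => hoff i]
    abel
  have e3 : (∑ i : Fin (n+1), ∑ k : Fin (n+1),
        TV (f (Function.update (Function.update (fun k' => T (y k')) i (y i)) k
          (br (T x) (Function.update (fun k' => T (y k')) i (y i) k)))))
      = (∑ i : Fin (n+1), TV (f (Function.update (fun k' => T (y k')) i (br (T x) (y i)))))
        + ∑ i : Fin (n+1), ∑ k : Fin n,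
            TV (f (Function.update (Function.update (fun k' => T (y k')) (i.succAbove k)
              (br (T x) (T (y (i.succAbove k))))) i (y i))) := by
    rw [← Finset.sum_add_distrib]
    refine Finset.sum_congr rfl fun i _ => ?_
    rw [Fin.sum_univ_succAbove (fun k =>
        TV (f (Function.update (Function.update (fun k' => T (y k')) i (y i)) k
          (br (T x) (Function.update (fun k' => T (y k')) i (y i) k))))) i]
    rw [Function.update_self, Function.update_idem]
    have hoff : ∀ k : Fin n,
        TV (f (Function.update (Function.update (fun k' => T (y k')) i (y i)) (i.succAbove k)
          (br (T x) (Function.update (fun k' => T (y k')) i (y i) (i.succAbove k)))))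
        = TV (f (Function.update (Function.update (fun k' => T (y k')) (i.succAbove k)
            (br (T x) (T (y (i.succAbove k))))) i (y i))) := fun k => by
      rw [Function.update_of_ne (Fin.succAbove_ne i k)]
      rw [Function.update_comm (Fin.succAbove_ne i k).symm]
    rw [Finset.sum_congr rfl fun k _ => hoff k]
  have e4 : (∑ j : Fin (n+1), ∑ i : Fin n,
        TV (f (Function.update (Function.update (fun k => T (y k)) j (br (T x) (T (y j))))
          (j.succAbove i) (y (j.succAbove i)))))
      = ∑ i : Fin (n+1), ∑ k : Fin n,
          TV (f (Function.update (Function.update (fun k' => T (y k')) (i.succAbove k)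
            (br (T x) (T (y (i.succAbove k))))) i (y i))) :=
    offdiag_eq (fun s t => TV (f (Function.update
      (Function.update (fun k => T (y k)) s (br (T x) (T (y s)))) t (y t))))
  rw [Finset.sum_congr rfl (fun i (_ : i ∈ Finset.univ) => e1 i), Finset.sum_add_distrib]
  rw [e2, e3, e4]
  abel
end starkey

section chain
variable {g V : Type*} [AddCommGroup g] [AddCommGroup V]
variable (br : g → g → g) (T : g → g) (l : g → V → V) (r : V → g → V) (TV : V → V)

theorem chainmap (hTadd : ∀ a b, T (a + b) = T a + T b)
    (hRB : ∀ a b, br (T a) (T b) = T (br (T a) b + br a (T b)))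
    (hRB1 : ∀ a u, l (T a) (TV u) = TV (l (T a) u + l a (TV u)))
    (hRB2 : ∀ a u, r (TV u) (T a) = TV (r (TV u) a + r u (T a)))
    (hladd : ∀ x u v, l x (u + v) = l x u + l x v)
    (hradd : ∀ u v b, r (u + v) b = r u b + r v b)
    (hTVadd : ∀ u v, TV (u + v) = TV u + TV v) :
    ∀ (n : ℕ) (f : (Fin n → g) → V), SlotAdd f → ∀ w : Fin (n+1) → g,
      lpCoboundary (fun a b => br a (T b) + br (T a) b)
          (fun a u => l (T a) u - TV (l a u))
          (fun u a => r u (T a) - TV (r u a)) n (phiMap T TV n f) w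
        = phiMap T TV (n+1) (lpCoboundary br l r n f) w := by
  have hTVsub : ∀ u v, TV (u - v) = TV u - TV v := addf_sub hTVadd
  have hladdStar : ∀ (a : g) (u v : V),
      (l (T a) (u + v) - TV (l a (u + v))) = (l (T a) u - TV (l a u)) + (l (T a) v - TV (l a v)) := by
    intro a u v
    rw [hladd, hladd, hTVadd]
    abel
  have hraddStar : ∀ (u v : V) (b : g),
      (r (u + v) (T b) - TV (r (u + v) b)) = (r u (T b) - TV (r u b)) + (r v (T b) - TV (r v b)) := by
    intro u v b
    rw [hradd, hradd, hTVadd]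
    abel
  intro n
  induction n with
  | zero =>
    intro f hf w
    have hTVneg : ∀ u, TV (-u) = -TV u := fun u =>
      map_neg (AddMonoidHom.mk' TV hTVadd) u
    unfold lpCoboundary phiMap
    simp [Fin.sum_univ_succ]
    have hf0 : ∀ z : Fin 0 → g, f z = f (fun k => k.elim0) :=
      fun z => congrArg f (Subsingleton.elim _ _)
    simp only [hf0 (fun k => _), hTVneg]
    abel
  | succ n ih =>
    intro f hf w
    rw [← Fin.cons_self_tail w]
    rw [cartan _ _ _ (phiMap T TV (n+1) f) (w 0) (Fin.tail w)]
    have h1 : (fun z => phiMap T TV (n+1) f (Fin.cons (w 0) z))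
        = fun z => phiMap T TV n (fun z' => f (Fin.cons (T (w 0)) z')) z
            - TV (f (Fin.cons (w 0) (fun k => T (z k)))) :=
      funext fun z => phi_cons T TV f (w 0) z
    rw [h1]
    rw [delta_sub _ _ _ hladdStar hraddStar _ _ (Fin.tail w)]
    rw [ih (fun z' => f (Fin.cons (T (w 0)) z')) (slotadd_cons hf (T (w 0))) (Fin.tail w)]
    rw [starDelta_TV br T l r TV hTadd hRB hRB1 hRB2 hTVadd
      (fun z => f (Fin.cons (w 0) z)) (Fin.tail w)]
    rw [phi_cons T TV (lpCoboundary br l r (n+1) f) (w 0) (Fin.tail w)]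
    have h2 : (fun z => lpCoboundary br l r (n+1) f (Fin.cons (T (w 0)) z))
        = fun z => lieD br l (T (w 0)) f z
            - lpCoboundary br l r n (fun z' => f (Fin.cons (T (w 0)) z')) z :=
      funext fun z => cartan br l r f (T (w 0)) z
    rw [h2]
    rw [phi_sub T TV hTVadd (lieD br l (T (w 0)) f)
      (lpCoboundary br l r n (fun z' => f (Fin.cons (T (w 0)) z'))) (Fin.tail w)]
    rw [cartan br l r f (w 0) (fun k => T (Fin.tail w k))]
    rw [hTVsub]
    rw [starKey br T l TV hTadd hRB hRB1 hladd hTVadd f hf (w 0) (Fin.tail w)]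
    abel
end chain

section starrep
variable {g V : Type*} [AddCommGroup g] [AddCommGroup V]
variable (br : g → g → g) (T : g → g) (l : g → V → V) (r : V → g → V) (TV : V → V)

lemma star_leib (hbr1 : ∀ a a' b, br (a + a') b = br a b + br a' b)
    (hbr2 : ∀ a b b', br a (b + b') = br a b + br a b')
    (hleib : ∀ x y z, br x (br y z) = br (br x y) z + br y (br x z))
    (hTadd : ∀ a b, T (a + b) = T a + T b)
    (hRB : ∀ a b, br (T a) (T b) = T (br (T a) b + br a (T b))) :
    ∀ x y z, (fun a b => br a (T b) + br (T a) b) x ((fun a b => br a (T b) + br (T a) b) y z)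
      = (fun a b => br a (T b) + br (T a) b) ((fun a b => br a (T b) + br (T a) b) x y) z
        + (fun a b => br a (T b) + br (T a) b) y ((fun a b => br a (T b) + br (T a) b) x z) := by
  intro x y z
  have hTB := hTB_lemma br T hTadd hRB
  beta_reduce
  rw [hTB, hTB, hTB]
  rw [hbr2 (T x), hbr1, hbr2 (T y)]
  rw [hleib x (T y) (T z), hleib (T x) y (T z), hleib (T x) (T y) z]
  abel

lemma star_rep1 (hrep1 : ∀ x y u, l x (l y u) = l (br x y) u + l y (l x u))
    (hTadd : ∀ a b, T (a + b) = T a + T b)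
    (hRB : ∀ a b, br (T a) (T b) = T (br (T a) b + br a (T b)))
    (hRB1 : ∀ a u, l (T a) (TV u) = TV (l (T a) u + l a (TV u)))
    (hladd1 : ∀ a a' u, l (a + a') u = l a u + l a' u)
    (hladd : ∀ x u v, l x (u + v) = l x u + l x v)
    (hTVadd : ∀ u v, TV (u + v) = TV u + TV v) :
    ∀ x y u, (fun a u => l (T a) u - TV (l a u)) x ((fun a u => l (T a) u - TV (l a u)) y u)
      = (fun a u => l (T a) u - TV (l a u)) ((fun a b => br a (T b) + br (T a) b) x y) u
        + (fun a u => l (T a) u - TV (l a u)) y ((fun a u => l (T a) u - TV (l a u)) x u) := by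
  intro x y u
  have hTB := hTB_lemma br T hTadd hRB
  have hlsub : ∀ (a : g) (u v : V), l a (u - v) = l a u - l a v := fun a => addf_sub (hladd a)
  have hTVsub : ∀ u v, TV (u - v) = TV u - TV v := addf_sub hTVadd
  beta_reduce
  rw [hTB]
  simp only [hlsub, hTVsub, hladd1, hTVadd]
  rw [hRB1 x (l y u), hRB1 y (l x u)]
  simp only [hTVadd]
  rw [hrep1 (T x) (T y) u, hrep1 (T x) y u, hrep1 x (T y) u, hrep1 (T y) x u, hrep1 y (T x) u]
  simp only [hTVadd]
  abel

lemma star_rep2 (hrep2 : ∀ x y u, l x (r u y) = r (l x u) y + r u (br x y))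
    (hTadd : ∀ a b, T (a + b) = T a + T b)
    (hRB : ∀ a b, br (T a) (T b) = T (br (T a) b + br a (T b)))
    (hRB1 : ∀ a u, l (T a) (TV u) = TV (l (T a) u + l a (TV u)))
    (hRB2 : ∀ a u, r (TV u) (T a) = TV (r (TV u) a + r u (T a)))
    (hladd : ∀ x u v, l x (u + v) = l x u + l x v)
    (hradd : ∀ u v b, r (u + v) b = r u b + r v b)
    (hradd2 : ∀ u a a', r u (a + a') = r u a + r u a')
    (hTVadd : ∀ u v, TV (u + v) = TV u + TV v) :
    ∀ x y u, (fun a u => l (T a) u - TV (l a u)) x ((fun u a => r u (T a) - TV (r u a)) u y)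
      = (fun u a => r u (T a) - TV (r u a)) ((fun a u => l (T a) u - TV (l a u)) x u) y
        + (fun u a => r u (T a) - TV (r u a)) u ((fun a b => br a (T b) + br (T a) b) x y) := by
  intro x y u
  have hTB := hTB_lemma br T hTadd hRB
  have hlsub : ∀ (a : g) (u v : V), l a (u - v) = l a u - l a v := fun a => addf_sub (hladd a)
  have hrsub : ∀ (u v : V) (b : g), r (u - v) b = r u b - r v b :=
    fun u v b => addf_sub (k := fun w => r w b) (fun u v => hradd u v b) u v
  have hTVsub : ∀ u v, TV (u - v) = TV u - TV v := addf_sub hTVadd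
  beta_reduce
  rw [hTB]
  simp only [hlsub, hrsub, hTVsub, hradd2, hTVadd]
  rw [hRB1 x (r u y), hRB2 y (l x u)]
  simp only [hTVadd]
  rw [hrep2 (T x) (T y) u, hrep2 (T x) y u, hrep2 x (T y) u]
  simp only [hTVadd]
  abel

lemma star_rep3 (hrep3 : ∀ x y u, r u (br x y) = r (r u x) y + l x (r u y))
    (hTadd : ∀ a b, T (a + b) = T a + T b)
    (hRB : ∀ a b, br (T a) (T b) = T (br (T a) b + br a (T b)))
    (hRB1 : ∀ a u, l (T a) (TV u) = TV (l (T a) u + l a (TV u)))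
    (hRB2 : ∀ a u, r (TV u) (T a) = TV (r (TV u) a + r u (T a)))
    (hladd : ∀ x u v, l x (u + v) = l x u + l x v)
    (hradd : ∀ u v b, r (u + v) b = r u b + r v b)
    (hradd2 : ∀ u a a', r u (a + a') = r u a + r u a')
    (hTVadd : ∀ u v, TV (u + v) = TV u + TV v) :
    ∀ x y u, (fun u a => r u (T a) - TV (r u a)) u ((fun a b => br a (T b) + br (T a) b) x y)
      = (fun u a => r u (T a) - TV (r u a)) ((fun u a => r u (T a) - TV (r u a)) u x) y
        + (fun a u => l (T a) u - TV (l a u)) x ((fun u a => r u (T a) - TV (r u a)) u y) := by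
  intro x y u
  have hTB := hTB_lemma br T hTadd hRB
  have hlsub : ∀ (a : g) (u v : V), l a (u - v) = l a u - l a v := fun a => addf_sub (hladd a)
  have hrsub : ∀ (u v : V) (b : g), r (u - v) b = r u b - r v b :=
    fun u v b => addf_sub (k := fun w => r w b) (fun u v => hradd u v b) u v
  have hTVsub : ∀ u v, TV (u - v) = TV u - TV v := addf_sub hTVadd
  beta_reduce
  rw [hTB]
  simp only [hrsub, hlsub, hTVsub, hradd2, hTVadd]
  rw [hRB2 y (r u x), hRB1 x (r u y)]
  simp only [hTVadd]
  rw [hrep3 (T x) (T y) u, hrep3 (T x) y u, hrep3 x (T y) u]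
  simp only [hTVadd]
  abel
end starrep

end RBLA

open RBLA

/-- The coboundary `d^n(α,β) = (δ^n α, -∂^{n-1} β - φ^n α)` of the Rota-Baxter
Leibniz algebra cochain complex squares to zero for all `n ≥ 1` (here
`n = m + 1`): both components of `d^{n+1}(d^n(α,β))` vanish. -/

theorem rbla_coboundary_squares_to_zero {K : Type*} [Field K]
    {g : Type*} [AddCommGroup g] [Module K g]
    {V : Type*} [AddCommGroup V] [Module K V]
    (br : g → g → g) (hbil : Bilin K br) (hleib : IsLeibnizBracket br)
    (T : g → g) (hT : IsLinearMap K T)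
    (hRB : ∀ x y, br (T x) (T y) = T (br (T x) y + br x (T y)))
    (l : g → V → V) (r : V → g → V) (TV : V → V)
    (hl : Bilin K l) (hr : Bilin K r) (hTV : IsLinearMap K TV)
    (hrep : IsRBRep br T l r TV) :
    ∀ (m : ℕ) (α : MultilinearMap K (fun _ : Fin (m + 1) => g) V)
      (β : MultilinearMap K (fun _ : Fin m => g) V),
      (∀ x : Fin (m + 3) → g,
        lpCoboundary br l r (m + 2) (lpCoboundary br l r (m + 1) ⇑α) x = 0) ∧
      (∀ x : Fin (m + 2) → g,
        - lpCoboundary (fun a b => br a (T b) + br (T a) b)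
            (fun a u => l (T a) u - TV (l a u))
            (fun u a => r u (T a) - TV (r u a)) (m + 1)
            (fun y =>
              - lpCoboundary (fun a b => br a (T b) + br (T a) b)
                  (fun a u => l (T a) u - TV (l a u))
                  (fun u a => r u (T a) - TV (r u a)) m ⇑β y
                - phiMap T TV (m + 1) ⇑α y) x
          - phiMap T TV (m + 2) (lpCoboundary br l r (m + 1) ⇑α) x = 0) := by
  intro m α β
  obtain ⟨⟨hrep1, hrep2, hrep3⟩, hRB1, hRB2⟩ := hrep
  have hladd : ∀ (x : g) (u v : V), l x (u + v) = l x u + l x v := hl.2.2.1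
  have hradd : ∀ (u v : V) (b : g), r (u + v) b = r u b + r v b := hr.1
  have hradd2 : ∀ (u : V) (a a' : g), r u (a + a') = r u a + r u a' := hr.2.2.1
  have hbr1 : ∀ a a' b, br (a + a') b = br a b + br a' b := hbil.1
  have hbr2 : ∀ a b b', br a (b + b') = br a b + br a b' := hbil.2.2.1
  have hladd1 : ∀ (a a' : g) (u : V), l (a + a') u = l a u + l a' u := hl.1
  have hTadd : ∀ a b, T (a + b) = T a + T b := hT.map_add
  have hTVadd : ∀ u v, TV (u + v) = TV u + TV v := hTV.map_add
  have hα : SlotAdd (⇑α) := fun y i a b => α.map_update_add y i a b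
  have hβ : SlotAdd (⇑β) := fun y i a b => β.map_update_add y i a b
  have hsleib := star_leib br T hbr1 hbr2 hleib hTadd hRB
  have hsrep1 := star_rep1 br T l TV hrep1 hTadd hRB hRB1 hladd1 hladd hTVadd
  have hsrep2 := star_rep2 br T l r TV hrep2 hTadd hRB hRB1 hRB2 hladd hradd hradd2 hTVadd
  have hsrep3 := star_rep3 br T l r TV hrep3 hTadd hRB hRB1 hRB2 hladd hradd hradd2 hTVadd
  have hladdStar : ∀ (a : g) (u v : V),
      (fun a u => l (T a) u - TV (l a u)) a (u + v)
        = (fun a u => l (T a) u - TV (l a u)) a u + (fun a u => l (T a) u - TV (l a u)) a v := by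
    intro a u v
    beta_reduce
    rw [hladd, hladd, hTVadd]
    abel
  have hraddStar : ∀ (u v : V) (b : g),
      (fun u a => r u (T a) - TV (r u a)) (u + v) b
        = (fun u a => r u (T a) - TV (r u a)) u b + (fun u a => r u (T a) - TV (r u a)) v b := by
    intro u v b
    beta_reduce
    rw [hradd, hradd, hTVadd]
    abel
  constructor
  · intro x
    exact sq_zero br l r hleib hrep1 hrep2 hrep3 hladd hradd (m+1) ⇑α hα x
  · intro x
    rw [delta_sub (fun a b => br a (T b) + br (T a) b)
        (fun a u => l (T a) u - TV (l a u)) (fun u a => r u (T a) - TV (r u a))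
        hladdStar hraddStar
        (fun y => - lpCoboundary (fun a b => br a (T b) + br (T a) b)
            (fun a u => l (T a) u - TV (l a u))
            (fun u a => r u (T a) - TV (r u a)) m ⇑β y)
        (phiMap T TV (m + 1) ⇑α) x]
    rw [delta_neg (fun a b => br a (T b) + br (T a) b)
        (fun a u => l (T a) u - TV (l a u)) (fun u a => r u (T a) - TV (r u a))
        hladdStar hraddStar
        (lpCoboundary (fun a b => br a (T b) + br (T a) b)
            (fun a u => l (T a) u - TV (l a u))
            (fun u a => r u (T a) - TV (r u a)) m ⇑β) x]
    rw [sq_zero (fun a b => br a (T b) + br (T a) b)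
        (fun a u => l (T a) u - TV (l a u)) (fun u a => r u (T a) - TV (r u a))
        hsleib hsrep1 hsrep2 hsrep3 hladdStar hraddStar m ⇑β hβ x]
    rw [chainmap br T l r TV hTadd hRB hRB1 hRB2 hladd hradd hTVadd (m+1) ⇑α hα x]
    abel
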